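/- Let Δ = Δ₁ + ⋯ + Δ_r be a proper Q-nef-partition in ℝ^d, i.e. Δ_i ≠ {0} for all i = 1,…,r. Then Δ_i ∩ ℤ^d ≠ {0} for all i = 1,…,r; that is, each Δ_i contains a nonzero lattice point. -/

import Mathlib

open Pointwise

noncomputable section

/-- The standard inner product on `n → ℝ`. -/
def dot {n : Type*} [Fintype n] (x y : n → ℝ) : ℝ := ∑ i, x i * y i

/-- The lattice points of `n → ℝ`: points with integer coordinates. -/
def latt (n : Type*) [Fintype n] : Set (n → ℝ) := {x | ∀ i, ∃ m : ℤ, x i = (m : ℝ)}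

/-- Polar dual `S* = {y | ⟨x,y⟩ ≥ -1 ∀ x ∈ S}`. -/
def polarDual {n : Type*} [Fintype n] (S : Set (n → ℝ)) : Set (n → ℝ) :=
  {y | ∀ x ∈ S, -1 ≤ dot x y}

/-- `[S]`: the convex hull of the lattice points of `S`. -/
def latticeHull {n : Type*} [Fintype n] (S : Set (n → ℝ)) : Set (n → ℝ) :=
  convexHull ℝ (S ∩ latt n)

/-- A polytope: the convex hull of a finite set. -/
def IsPolytope {n : Type*} [Fintype n] (P : Set (n → ℝ)) : Prop :=
  ∃ F : Set (n → ℝ), F.Finite ∧ P = convexHull ℝ F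

/-- A lattice polytope: the convex hull of a finite set of lattice points. -/
def IsLatticePolytope {n : Type*} [Fintype n] (P : Set (n → ℝ)) : Prop :=
  ∃ F : Set (n → ℝ), F.Finite ∧ F ⊆ latt n ∧ P = convexHull ℝ F

/-- A full-dimensional polytope `P` with `0` in its interior is Q-reflexive if
`[[P]*] = P*`. -/
def IsQReflexive {n : Type*} [Fintype n] (P : Set (n → ℝ)) : Prop :=
  IsPolytope P ∧ 0 ∈ interior P ∧ latticeHull (polarDual (latticeHull P)) = polarDual P

/-- A full-dimensional lattice polytope `P` with `0` in its interior is almost reflexive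
if `[[P*]*] = P`. -/
def IsAlmostReflexive {n : Type*} [Fintype n] (P : Set (n → ℝ)) : Prop :=
  IsLatticePolytope P ∧ 0 ∈ interior P ∧
    latticeHull (polarDual (latticeHull (polarDual P))) = P

/-- A full-dimensional lattice polytope `P` with `0` in its interior is reflexive
if `P*` is a lattice polytope. -/
def IsReflexive {n : Type*} [Fintype n] (P : Set (n → ℝ)) : Prop :=
  IsLatticePolytope P ∧ 0 ∈ interior P ∧ IsLatticePolytope (polarDual P)

/-- A Q-nef-partition: a Minkowski-sum decomposition `Δ = Δ₁ + ⋯ + Δ_r` of a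
Q-reflexive polytope into polytopes with `0 ∈ Δᵢ`, such that
`[Δ] = [Δ₁] + ⋯ + [Δ_r]`. -/
def IsQNefPartition {d r : ℕ} (Δ : Fin r → Set (Fin d → ℝ)) : Prop :=
  IsQReflexive (∑ i, Δ i) ∧ (∀ i, IsPolytope (Δ i)) ∧
    (∀ i, (0 : Fin d → ℝ) ∈ Δ i) ∧
    latticeHull (∑ i, Δ i) = ∑ i, latticeHull (Δ i)

/-- `∇_j := {y : ⟨x, y⟩ ≥ −δ_{ij} for all x ∈ [Δ_i] and all i}`. -/
def nabla {d r : ℕ} (Δ : Fin r → Set (Fin d → ℝ)) (j : Fin r) : Set (Fin d → ℝ) :=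
  {y | ∀ i, ∀ x ∈ latticeHull (Δ i), -(if i = j then (1 : ℝ) else 0) ≤ dot x y}
/-! ### Auxiliary lemmas -/

section Aux
variable {n : Type*} [Fintype n]

theorem dot_add_left' (x z y : n → ℝ) : dot (x + z) y = dot x y + dot z y := by
  simp [dot, add_mul, Finset.sum_add_distrib]

theorem dot_smul_left' (c : ℝ) (x y : n → ℝ) : dot (c • x) y = c * dot x y := by
  simp only [dot, Pi.smul_apply, smul_eq_mul, Finset.mul_sum, mul_assoc]

theorem dot_comm' (x y : n → ℝ) : dot x y = dot y x := by
  simp [dot, mul_comm]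

theorem dot_smul_right' (c : ℝ) (x y : n → ℝ) : dot x (c • y) = c * dot x y := by
  rw [dot_comm', dot_smul_left', dot_comm']

theorem latt_zero : (0 : n → ℝ) ∈ latt n := fun i => ⟨0, by simp⟩

theorem latt_nsmul {y : n → ℝ} (hy : y ∈ latt n) (k : ℕ) : (k : ℝ) • y ∈ latt n := by
  intro i
  obtain ⟨m, hm⟩ := hy i
  exact ⟨k * m, by push_cast; simp [hm]⟩

theorem dot_int {x y : n → ℝ} (hx : x ∈ latt n) (hy : y ∈ latt n) :
    ∃ m : ℤ, dot x y = (m : ℝ) := by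
  classical
  choose mx hmx using hx
  choose my hmy using hy
  refine ⟨∑ i, mx i * my i, ?_⟩
  rw [dot]
  push_cast
  exact Finset.sum_congr rfl fun i _ => by rw [hmx, hmy]

theorem isLinearMap_dot_left (y : n → ℝ) : IsLinearMap ℝ fun x : n → ℝ => dot x y :=
  ⟨fun a b => dot_add_left' a b y, fun c a => dot_smul_left' c a y⟩

theorem convex_dot_halfspace (y : n → ℝ) : Convex ℝ {x : n → ℝ | 0 ≤ dot x y} :=
  convex_halfSpace_ge (isLinearMap_dot_left y) 0

theorem dot_self_pos {y : n → ℝ} (hy : y ≠ 0) : 0 < dot y y := by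
  obtain ⟨i, hi⟩ := Function.ne_iff.mp hy
  have h1 : (0:ℝ) < y i * y i := mul_self_pos.mpr hi
  have h2 : y i * y i ≤ dot y y :=
    Finset.single_le_sum (f := fun i => y i * y i) (fun j _ => mul_self_nonneg _)
      (Finset.mem_univ i)
  linarith

end Aux

/-- If `Δ = Δ₁ + ⋯ + Δ_r` is a proper Q-nef-partition (`Δ_i ≠ {0}` for
all `i`), then `Δ_i ∩ ℤ^d ≠ {0}` for all `i`; that is, each `Δ_i` contains a nonzero
lattice point. -/
theorem proper_qnefpartition_lattice_points {d r : ℕ} (hd : 0 < d)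
    (Δ : Fin r → Set (Fin d → ℝ)) (hQ : IsQNefPartition Δ)
    (hproper : ∀ i, Δ i ≠ {0}) :
    ∀ i, Δ i ∩ latt (Fin d) ≠ {0} ∧ ∃ x ∈ Δ i ∩ latt (Fin d), x ≠ 0 := by
  classical
  obtain ⟨⟨hpoly, hint, hrefl⟩, hpolys, h0, hdecomp⟩ := hQ
  have hsubΔ : ∀ i, latticeHull (Δ i) ⊆ Δ i := by
    intro i
    obtain ⟨Fi, hFi, hΔi⟩ := hpolys i
    exact convexHull_min Set.inter_subset_left (hΔi ▸ convex_convexHull ℝ Fi)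
  obtain ⟨F, hF, hTF⟩ := hpoly
  have hcomp : IsCompact (∑ i, Δ i) := by rw [hTF]; exact hF.isCompact_convexHull ℝ
  -- Key fact: for every nonzero lattice direction `y`, some lattice point `z` of the
  -- total polytope satisfies `⟨z, y⟩ ≤ -1`.
  have bridge : ∀ y ∈ latt (Fin d), y ≠ 0 →
      ∃ z ∈ (∑ i, Δ i) ∩ latt (Fin d), dot z y ≤ -1 := by
    intro y hy hyne
    by_contra hza
    push_neg at hza
    have hz0 : (∑ i, Δ i) ∩ latt (Fin d) ⊆ {x | 0 ≤ dot x y} := by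
      intro z hz
      obtain ⟨m, hm⟩ := dot_int hz.2 hy
      have h1 : (-1 : ℝ) < (m : ℝ) := hm ▸ hza z hz
      have h1' : (-1 : ℤ) < m := by exact_mod_cast h1
      have h2 : (0 : ℤ) ≤ m := by omega
      simp only [Set.mem_setOf_eq, hm]
      exact_mod_cast h2
    have hhull0 : ∀ x ∈ latticeHull (∑ i, Δ i), 0 ≤ dot x y :=
      fun x hx => convexHull_min hz0 (convex_dot_halfspace y) hx
    have hTy : ∀ x ∈ (∑ i, Δ i), 0 ≤ dot x y := by
      intro x hx
      by_contra hneg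
      push_neg at hneg
      obtain ⟨k, hk⟩ := exists_nat_gt (1 / (-(dot x y)))
      have hky : (k : ℝ) • y ∈ polarDual (latticeHull (∑ i, Δ i)) := by
        intro p hp
        rw [dot_smul_right']
        have h3 := hhull0 p hp
        have h4 : 0 ≤ (k : ℝ) * dot p y := by positivity
        linarith
      have hmem : (k : ℝ) • y ∈ polarDual (∑ i, Δ i) := by
        rw [← hrefl]
        exact subset_convexHull ℝ _ ⟨hky, latt_nsmul hy k⟩
      have hx' := hmem x hx
      rw [dot_smul_right'] at hx'
      have hpos : (0 : ℝ) < -(dot x y) := by linarith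
      have h1 : (1 : ℝ) < (k : ℝ) * -(dot x y) := (div_lt_iff₀ hpos).mp hk
      rw [mul_neg] at h1
      linarith
    -- now `y` must vanish since `0` is interior
    obtain ⟨ε, hε, hball⟩ := Metric.mem_nhds_iff.mp (mem_interior_iff_mem_nhds.mp hint)
    have hypos : (0 : ℝ) < ‖y‖ + 1 := by positivity
    set t : ℝ := ε / (2 * (‖y‖ + 1)) with ht
    have htpos : 0 < t := by positivity
    have hmemball : (-t) • y ∈ Metric.ball (0 : Fin d → ℝ) ε := by
      rw [mem_ball_zero_iff, norm_smul, Real.norm_eq_abs, abs_neg, abs_of_pos htpos]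
      have h5 : t * ‖y‖ ≤ t * (‖y‖ + 1) := by nlinarith [norm_nonneg y]
      have h6 : t * (‖y‖ + 1) = ε / 2 := by
        rw [ht]; field_simp
      linarith
    have h7 := hTy _ (hball hmemball)
    rw [dot_smul_left'] at h7
    have hdy := dot_self_pos hyne
    nlinarith
  intro j
  have key : ∃ x ∈ Δ j ∩ latt (Fin d), x ≠ 0 := by
    by_contra hcon
    push_neg at hcon
    have hjlat : Δ j ∩ latt (Fin d) = {0} :=
      Set.eq_singleton_iff_unique_mem.mpr ⟨⟨h0 j, latt_zero⟩, fun x hx => hcon x hx⟩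
    have hHullj : latticeHull (Δ j) = {0} := by
      rw [latticeHull, hjlat, convexHull_singleton]
    have hbad : Δ j = {0} := by
      refine Set.eq_singleton_iff_unique_mem.mpr ⟨h0 j, ?_⟩
      intro w hw
      by_contra hwne
      -- Step A: every lattice point of `[Δ]*` pairs nonnegatively with `w`.
      have stepA : polarDual (latticeHull (∑ i, Δ i)) ∩ latt (Fin d) ⊆
          {y | 0 ≤ dot y w} := by
        rintro y ⟨hyP, hylat⟩
        by_cases hy0 : y = 0
        · simp [hy0, dot]
        · obtain ⟨z, ⟨hzT, hzlat⟩, hzy⟩ := bridge y hylat hy0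
          have hzHull : z ∈ latticeHull (∑ i, Δ i) :=
            subset_convexHull ℝ _ ⟨hzT, hzlat⟩
          rw [hdecomp] at hzHull
          obtain ⟨g, hg, hgz⟩ := (Set.mem_fintype_sum _ _).mp hzHull
          have hgj : g j = 0 := by
            have h8 := hg j
            rw [hHullj] at h8
            exact h8
          have hzw : z + w ∈ (∑ i, Δ i) := by
            have hmem := Set.finset_sum_mem_finset_sum Finset.univ Δ
              (Function.update g j w) ?_
            · have h9 : ∑ i, Function.update g j w i = z + w := by
                rw [Finset.sum_update_of_mem (Finset.mem_univ j), ← hgz,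
                  Finset.sum_eq_sum_sdiff_singleton_add (Finset.mem_univ j) g, hgj]
                abel
              rwa [h9] at hmem
            · intro i _
              rcases eq_or_ne i j with rfl | hij
              · rw [Function.update_self]; exact hw
              · rw [Function.update_of_ne hij]
                exact hsubΔ i (hg i)
          have hyT : y ∈ polarDual (∑ i, Δ i) := by
            rw [← hrefl]
            exact subset_convexHull ℝ _ ⟨hyP, hylat⟩
          have h10 := hyT _ hzw
          rw [dot_add_left'] at h10
          simp only [Set.mem_setOf_eq]
          rw [dot_comm']
          linarith
      -- Extend to the whole dual `Δ* = [[Δ]*]`.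
      have hconvA : ∀ y ∈ polarDual (∑ i, Δ i), 0 ≤ dot w y := by
        intro y hy
        rw [← hrefl] at hy
        have h11 := convexHull_min stepA (convex_dot_halfspace w) hy
        simpa [dot_comm'] using h11
      -- Step B: build an explicit element of `Δ*` pairing negatively with `w`.
      obtain ⟨R, hR⟩ := isBounded_iff_forall_norm_le.mp hcomp.isBounded
      set R₀ : ℝ := max R 0 with hR₀
      have hR₀0 : (0 : ℝ) ≤ R₀ := le_max_right _ _
      set Sw : ℝ := ∑ i, |w i| with hSw
      have hSwpos : 0 < Sw := by
        obtain ⟨i, hi⟩ := Function.ne_iff.mp hwne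
        have h12 : 0 < |w i| := abs_pos.mpr hi
        have h13 : |w i| ≤ Sw :=
          Finset.single_le_sum (f := fun i => |w i|) (fun j _ => abs_nonneg _)
            (Finset.mem_univ i)
        linarith
      set c : ℝ := 1 / ((R₀ + 1) * Sw) with hc
      have hcpos : 0 < c := by
        rw [hc]
        positivity
      have hy₀ : (-c) • w ∈ polarDual (∑ i, Δ i) := by
        intro x hx
        rw [dot_smul_right']
        have hb : |dot x w| ≤ R₀ * Sw := by
          have h14 : |dot x w| ≤ ∑ i, |x i * w i| := Finset.abs_sum_le_sum_abs _ _
          have h15 : ∀ i, |x i * w i| ≤ R₀ * |w i| := by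
            intro i
            rw [abs_mul]
            have hxi : |x i| ≤ R₀ := by
              have := norm_le_pi_norm x i
              have := hR x hx
              simp only [Real.norm_eq_abs] at *
              exact le_trans (by linarith) (le_max_left _ _)
            exact mul_le_mul_of_nonneg_right hxi (abs_nonneg _)
          calc |dot x w| ≤ ∑ i, |x i * w i| := h14
            _ ≤ ∑ i, R₀ * |w i| := Finset.sum_le_sum fun i _ => h15 i
            _ = R₀ * Sw := by rw [hSw, Finset.mul_sum]
        have h16 : c * dot x w ≤ c * (R₀ * Sw) :=
          le_trans (mul_le_mul_of_nonneg_left (le_abs_self _) hcpos.le)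
            (mul_le_mul_of_nonneg_left hb hcpos.le)
        have h17 : c * (R₀ * Sw) < 1 := by
          rw [hc, div_mul_eq_mul_div, one_mul, div_lt_one (by positivity)]
          nlinarith
        nlinarith
      have hfin := hconvA _ hy₀
      rw [dot_smul_right'] at hfin
      have h18 := dot_self_pos hwne
      nlinarith
    exact hproper j hbad
  refine ⟨?_, key⟩
  obtain ⟨x, hx, hxne⟩ := key
  intro heq
  rw [heq] at hx
  exact hxne hx
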